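/- arXiv:1605.06395 — 2 statements merged into one kernel-verified Lean document; each statement's English description precedes it below -/
import Mathlib

section
/- Let G = G₀ *_H G₁ be a nondegenerate free product with amalgamation. For every k ≥ 0: K₀ ⊆ gC_kg⁻¹ for every g ∈ T_{0,k+1}, and K₁ ⊆ gC_kg⁻¹ for every g ∈ T_{1,k+1}. Consequently, if C_k = {e} for some k ≥ 0, then K₀ = K₁ = {e}. -/
variable {G : Type*} [Group G]

/-- `AltWord G₀ G₁ H j w`: the list `w` is an alternating word whose `i`-th letter lies in
`G_{(i+j) mod 2} \ H`. -/
def AltWord (G₀ G₁ H : Subgroup G) (j : ℕ) (w : List G) : Prop :=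
  ∀ (i : ℕ) (hi : i < w.length),
    w.get ⟨i, hi⟩ ∈ (if (i + j) % 2 = 0 then (G₀ : Set G) else (G₁ : Set G)) \ (H : Set G)

/-- the ambient alternating set -/
def aset (G₀ G₁ : Subgroup G) (n : ℕ) : Set G :=
  if n % 2 = 0 then (G₀ : Set G) else (G₁ : Set G)

lemma aset_congr (G₀ G₁ : Subgroup G) {m n : ℕ} (h : m % 2 = n % 2) :
    aset G₀ G₁ m = aset G₀ G₁ n := by
  unfold aset; rw [h]

lemma altWord_iff (G₀ G₁ H : Subgroup G) (j : ℕ) (w : List G) :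
    AltWord G₀ G₁ H j w ↔ ∀ (i : ℕ) (hi : i < w.length),
      w[i] ∈ aset G₀ G₁ (i + j) \ (H : Set G) := Iff.rfl

lemma altWord_congr {G₀ G₁ H : Subgroup G} {j j' : ℕ} (h : j % 2 = j' % 2) {w : List G}
    (hw : AltWord G₀ G₁ H j w) : AltWord G₀ G₁ H j' w := by
  rw [altWord_iff] at hw ⊢
  intro i hi
  rw [aset_congr G₀ G₁ (show (i + j') % 2 = (i + j) % 2 by omega)]
  exact hw i hi

lemma altWord_tail {G₀ G₁ H : Subgroup G} {j : ℕ} {a : G} {v : List G}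
    (h : AltWord G₀ G₁ H j (a :: v)) : AltWord G₀ G₁ H (j + 1) v := by
  rw [altWord_iff] at h ⊢
  intro i hi
  have := h (i + 1) (by simpa using Nat.succ_lt_succ hi)
  rw [aset_congr G₀ G₁ (show (i + (j+1)) % 2 = (i + 1 + j) % 2 by omega)]
  simpa using this

lemma altWord_head {G₀ G₁ H : Subgroup G} {j : ℕ} {a : G} {v : List G}
    (h : AltWord G₀ G₁ H j (a :: v)) : a ∈ aset G₀ G₁ j \ (H : Set G) := by
  rw [altWord_iff] at h
  have := h 0 (by simp)
  simpa using this

lemma altWord_append {G₀ G₁ H : Subgroup G} {j : ℕ} {u v : List G}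
    (hu : AltWord G₀ G₁ H j u) (hv : AltWord G₀ G₁ H (u.length + j) v) :
    AltWord G₀ G₁ H j (u ++ v) := by
  rw [altWord_iff] at hu hv ⊢
  intro i hi
  rcases lt_or_ge i u.length with h | h
  · rw [List.getElem_append_left h]; exact hu i h
  · have hlen : i - u.length < v.length := by simp at hi; omega
    rw [List.getElem_append_right h]
    have := hv (i - u.length) hlen
    rwa [aset_congr G₀ G₁ (show (i + j) % 2 = (i - u.length + (u.length + j)) % 2 by omega)]

lemma altWord_prefix {G₀ G₁ H : Subgroup G} {j : ℕ} {u v : List G}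
    (h : AltWord G₀ G₁ H j (u ++ v)) : AltWord G₀ G₁ H j u := by
  rw [altWord_iff] at h ⊢
  intro i hi
  have := h i (by simp; omega)
  rwa [List.getElem_append_left hi] at this

lemma altWord_last {G₀ G₁ H : Subgroup G} {j : ℕ} {u : List G} {x : G}
    (h : AltWord G₀ G₁ H j (u ++ [x])) : x ∈ aset G₀ G₁ (u.length + j) \ (H : Set G) := by
  rw [altWord_iff] at h
  have := h u.length (by simp)
  rw [List.getElem_append_right (le_refl _)] at this
  simpa using this

lemma altWord_single {G₀ G₁ H : Subgroup G} {j : ℕ} {x : G}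
    (h : x ∈ aset G₀ G₁ j \ (H : Set G)) : AltWord G₀ G₁ H j [x] := by
  rw [altWord_iff]
  intro i hi
  simp at hi
  subst hi
  simpa using h

lemma H_le_aset {G₀ G₁ H : Subgroup G} (h0 : H ≤ G₀) (h1 : H ≤ G₁) (n : ℕ) :
    (H : Set G) ⊆ aset G₀ G₁ n := by
  unfold aset; split <;> [exact h0; exact h1]

lemma aset_mul {G₀ G₁ : Subgroup G} {n : ℕ} {x y : G} (hx : x ∈ aset G₀ G₁ n)
    (hy : y ∈ aset G₀ G₁ n) : x * y ∈ aset G₀ G₁ n := by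
  unfold aset at *
  split at hx <;> simp_all <;> exact mul_mem hx hy

/-- `G` is the free product of its subgroups `G₀` and `G₁` amalgamated over their common
subgroup `H` (internal characterization: `G₀ ∩ G₁ = H`, the subgroups `G₀` and `G₁` generate
`G`, and no nonempty alternating word with letters in `G₀ \ H` and `G₁ \ H` has product
in `H`). -/
structure IsAmalgam (G₀ G₁ H : Subgroup G) : Prop where
  le_left : H ≤ G₀
  le_right : H ≤ G₁
  inf_eq : G₀ ⊓ G₁ = H
  closure_eq_top : Subgroup.closure ((G₀ : Set G) ∪ (G₁ : Set G)) = ⊤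
  reduced : ∀ (j : ℕ) (w : List G), w ≠ [] → AltWord G₀ G₁ H j w → w.prod ∉ H

/-- The amalgam `G₀ *_H G₁` is *nondegenerate*: `([G₀ : H] − 1) · ([G₁ : H] − 1) ≥ 2`,
i.e. `H` is a proper subgroup of both `G₀` and `G₁`, and has index at least `3` (possibly
infinite) in at least one of them. -/
def Nondegenerate (G₀ G₁ H : Subgroup G) : Prop :=
  H.relIndex G₀ ≠ 1 ∧ H.relIndex G₁ ≠ 1 ∧ ¬(H.relIndex G₀ = 2 ∧ H.relIndex G₁ = 2)

/-- `T_{j,k}`: the set of elements of `G` that are products of alternating words of length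
`k` whose first letter lies in `G_j \ H`; by convention `T_{j,0} = H`. -/
def TT (G₀ G₁ H : Subgroup G) (j k : ℕ) : Set G :=
  if k = 0 then (H : Set G)
  else {g | ∃ w : List G, w.length = k ∧ AltWord G₀ G₁ H j w ∧ w.prod = g}

lemma mem_TT_of_word {G₀ G₁ H : Subgroup G} {j : ℕ} {w : List G} (hw : AltWord G₀ G₁ H j w)
    (hne : w ≠ []) : w.prod ∈ TT G₀ G₁ H j w.length := by
  rw [TT, if_neg (by simpa using hne)]
  exact ⟨w, rfl, hw, rfl⟩

/-- Absorbing an element of `H` on the right of an alternating word. -/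
lemma absorb_right {G₀ G₁ H : Subgroup G} (h0 : H ≤ G₀) (h1 : H ≤ G₁) {j : ℕ} {u : List G}
    (hu : AltWord G₀ G₁ H j u) (hne : u ≠ []) {h : G} (hh : h ∈ H) :
    ∃ w : List G, w.length = u.length ∧ AltWord G₀ G₁ H j w ∧ w.prod = u.prod * h := by
  obtain ⟨u', x, rfl⟩ : ∃ u' x, u = u' ++ [x] :=
    ⟨u.dropLast, u.getLast hne, (List.dropLast_append_getLast hne).symm⟩
  have hx := altWord_last hu
  have hxh : x * h ∈ aset G₀ G₁ (u'.length + j) \ (H : Set G) := by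
    refine ⟨aset_mul hx.1 (H_le_aset h0 h1 _ hh), fun hmem => hx.2 ?_⟩
    have : (x * h) * h⁻¹ ∈ H := mul_mem hmem (inv_mem hh)
    simpa using this
  refine ⟨u' ++ [x * h], by simp, altWord_append (altWord_prefix hu) (altWord_single hxh), ?_⟩
  simp [mul_assoc]

/-- Key reduction lemma: the product of an alternating word `u` (pattern `j`) with a strictly
shorter alternating word `v` (any pattern `j'`) lies in some `T_{j,m}`. -/
lemma key_reduction {G₀ G₁ H : Subgroup G} (h0 : H ≤ G₀) (h1 : H ≤ G₁) :
    ∀ (v : List G) (j' j : ℕ) (u : List G), AltWord G₀ G₁ H j' v → AltWord G₀ G₁ H j u →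
      v.length < u.length → ∃ m, u.prod * v.prod ∈ TT G₀ G₁ H j m := by
  intro v
  induction v with
  | nil =>
    intro j' j u _ hu hlt
    refine ⟨u.length, by simpa using mem_TT_of_word hu (by intro h; simp [h] at hlt)⟩
  | cons t₀ v' ih =>
    intro j' j u hv hu hlt
    have hune : u ≠ [] := by intro h; simp [h] at hlt
    obtain ⟨u', x, rfl⟩ : ∃ u' x, u = u' ++ [x] :=
      ⟨u.dropLast, u.getLast hune, (List.dropLast_append_getLast hune).symm⟩
    have hx := altWord_last hu
    have ht₀ := altWord_head hv
    have hv' := altWord_tail hv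
    have hu' := altWord_prefix hu
    by_cases hc : j' % 2 = (u'.length + j) % 2
    · -- t₀ lands in the same factor as x
      have ht₀' : t₀ ∈ aset G₀ G₁ (u'.length + j) \ (H : Set G) := by
        rwa [aset_congr G₀ G₁ hc] at ht₀
      by_cases hxt : x * t₀ ∈ H
      · -- cancellation: absorb x * t₀ into the previous letter
        have hu'ne : u' ≠ [] := by
          intro h
          subst h
          simp at hlt
        obtain ⟨w, hwlen, hw, hwprod⟩ := absorb_right h0 h1 hu' hu'ne hxt
        have hwne : w ≠ [] := by
          intro h
          rw [h] at hwlen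
          exact hu'ne (List.length_eq_zero_iff.mp hwlen.symm)
        have hlt' : v'.length < w.length := by
          rw [hwlen]
          simp at hlt ⊢
          omega
        obtain ⟨m, hm⟩ := ih (j' + 1) j w hv' hw hlt'
        refine ⟨m, ?_⟩
        have : w.prod * v'.prod = (u' ++ [x]).prod * (t₀ :: v').prod := by
          rw [hwprod]
          simp [mul_assoc]
        rwa [this] at hm
      · -- merge x and t₀ into a single letter
        have hxt' : x * t₀ ∈ aset G₀ G₁ (u'.length + j) \ (H : Set G) :=
          ⟨aset_mul hx.1 ht₀'.1, hxt⟩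
        have hv'' : AltWord G₀ G₁ H ((u' ++ [x * t₀]).length + j) v' := by
          refine altWord_congr (show (j' + 1) % 2 = _ by simp; omega) hv'
        have hw : AltWord G₀ G₁ H j ((u' ++ [x * t₀]) ++ v') :=
          altWord_append (altWord_append hu' (altWord_single hxt')) hv''
        have hmem := mem_TT_of_word hw (by simp)
        have heq : ((u' ++ [x * t₀]) ++ v').prod = (u' ++ [x]).prod * (t₀ :: v').prod := by
          simp [mul_assoc]
        rw [heq] at hmem
        exact ⟨_, hmem⟩
    · -- no interaction: just concatenate
      have hv'' : AltWord G₀ G₁ H ((u' ++ [x]).length + j) (t₀ :: v') := by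
        refine altWord_congr (show j' % 2 = _ by simp; omega) hv
      have hw : AltWord G₀ G₁ H j ((u' ++ [x]) ++ (t₀ :: v')) := altWord_append hu hv''
      have hmem := mem_TT_of_word hw (by simp)
      rw [List.prod_append] at hmem
      exact ⟨_, hmem⟩

/-- `C_{j,k} = ⋂_{g ∈ T_{j,k}} g H g⁻¹`. -/
def CC (G₀ G₁ H : Subgroup G) (j k : ℕ) : Set G :=
  ⋂ g ∈ TT G₀ G₁ H j k, {x | g⁻¹ * x * g ∈ H}

/-- `K_j = ⋂_{k ≥ 0} C_{j,k}`. -/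
def KK (G₀ G₁ H : Subgroup G) (j : ℕ) : Set G :=
  ⋂ k : ℕ, CC G₀ G₁ H j k

/-- The kernel of the amalgam, `ker G = ⋂_{g ∈ G} g H g⁻¹`, as a set. -/
def amalgamKerSet (H : Subgroup G) : Set G :=
  ⋂ g : G, {x | g⁻¹ * x * g ∈ H}

/-- `C_k = ⋂_{0 ≤ n ≤ k, j ∈ {0,1}} C_{j,n}`. -/
def CFin (G₀ G₁ H : Subgroup G) (k : ℕ) : Set G :=
  ⋂ n ∈ Set.Iic k, CC G₀ G₁ H 0 n ∩ CC G₀ G₁ H 1 n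

/-- For `g ∈ T_{j,k+1}` and `t ∈ T_{j',n}` with `n ≤ k`, the product `g * t` lies in some
`T_{j,m}`. -/
lemma gt_mem_TT {G₀ G₁ H : Subgroup G} (h0 : H ≤ G₀) (h1 : H ≤ G₁) {j j' k n : ℕ} {g t : G}
    (hg : g ∈ TT G₀ G₁ H j (k + 1)) (ht : t ∈ TT G₀ G₁ H j' n) (hn : n ≤ k) :
    ∃ m, g * t ∈ TT G₀ G₁ H j m := by
  rw [TT, if_neg (Nat.succ_ne_zero k)] at hg
  obtain ⟨u, hulen, hu, hup⟩ := hg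
  have hune : u ≠ [] := by
    intro h
    rw [h] at hulen
    simp at hulen
  rcases Nat.eq_zero_or_pos n with rfl | hpos
  · rw [TT, if_pos rfl] at ht
    obtain ⟨w, hwlen, hw, hwp⟩ := absorb_right h0 h1 hu hune ht
    have hwne : w ≠ [] := by
      intro h
      rw [h] at hwlen
      exact hune (List.length_eq_zero_iff.mp hwlen.symm)
    refine ⟨w.length, ?_⟩
    have := mem_TT_of_word hw hwne
    rwa [hwp, hup] at this
  · rw [TT, if_neg (by omega)] at ht
    obtain ⟨v, hvlen, hv, hvp⟩ := ht
    have hlt : v.length < u.length := by omega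
    obtain ⟨m, hm⟩ := key_reduction h0 h1 v j' j u hv hu hlt
    rw [hup, hvp] at hm
    exact ⟨m, hm⟩

lemma KK_subset_conj {G₀ G₁ H : Subgroup G} (h0 : H ≤ G₀) (h1 : H ≤ G₁) (j k : ℕ) (g : G)
    (hg : g ∈ TT G₀ G₁ H j (k + 1)) :
    KK G₀ G₁ H j ⊆ {x | g⁻¹ * x * g ∈ CFin G₀ G₁ H k} := by
  intro x hx
  rw [KK] at hx
  have hx' : ∀ m s, s ∈ TT G₀ G₁ H j m → s⁻¹ * x * s ∈ H := by
    intro m s hs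
    have h2 : x ∈ CC G₀ G₁ H j m := Set.mem_iInter.mp hx m
    rw [CC] at h2
    exact Set.mem_iInter₂.mp h2 s hs
  have hconj : ∀ (j' n : ℕ) (t : G), n ≤ k → t ∈ TT G₀ G₁ H j' n →
      t⁻¹ * (g⁻¹ * x * g) * t ∈ H := by
    intro j' n t hn ht
    obtain ⟨m, hm⟩ := gt_mem_TT h0 h1 hg ht hn
    have := hx' m (g * t) hm
    have heq : t⁻¹ * (g⁻¹ * x * g) * t = (g * t)⁻¹ * x * (g * t) := by group
    rwa [heq]
  show g⁻¹ * x * g ∈ CFin G₀ G₁ H k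
  rw [CFin]
  refine Set.mem_iInter₂.2 fun n hn => ⟨?_, ?_⟩ <;>
    · rw [CC]
      exact Set.mem_iInter₂.2 fun t ht => hconj _ n t hn ht

lemma TT_nonempty {G₀ G₁ H : Subgroup G} (hnd0 : ¬G₀ ≤ H) (hnd1 : ¬G₁ ≤ H) (j k : ℕ) :
    ∃ g, g ∈ TT G₀ G₁ H j (k + 1) := by
  obtain ⟨a, haG, haH⟩ := Set.not_subset.mp fun h => hnd0 fun y hy => h hy
  obtain ⟨b, hbG, hbH⟩ := Set.not_subset.mp fun h => hnd1 fun y hy => h hy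
  have hwalt : AltWord G₀ G₁ H j
      (List.ofFn (fun i : Fin (k + 1) => if ((i : ℕ) + j) % 2 = 0 then a else b)) := by
    intro i hi
    rw [List.get_eq_getElem, List.getElem_ofFn]
    simp only [Set.mem_diff]
    by_cases h : (i + j) % 2 = 0 <;> simp only [h, if_true, if_false]
    · exact ⟨haG, haH⟩
    · exact ⟨hbG, hbH⟩
  have hne : (List.ofFn (fun i : Fin (k + 1) => if ((i : ℕ) + j) % 2 = 0 then a else b)) ≠ [] := by
    rw [← List.length_pos_iff]
    simp
  have := mem_TT_of_word hwalt hne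
  rw [List.length_ofFn] at this
  exact ⟨_, this⟩

lemma one_mem_KK (G₀ G₁ H : Subgroup G) (j : ℕ) : (1 : G) ∈ KK G₀ G₁ H j := by
  rw [KK]
  refine Set.mem_iInter.2 fun m => ?_
  rw [CC]
  refine Set.mem_iInter₂.2 fun s _ => ?_
  show s⁻¹ * 1 * s ∈ (H : Set G)
  simpa using H.one_mem

/-- Let `G = G₀ *_H G₁` be a nondegenerate free product with amalgamation. For every
`k ≥ 0`: `K₀ ⊆ g C_k g⁻¹` for every `g ∈ T_{0,k+1}`, and `K₁ ⊆ g C_k g⁻¹` for every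
`g ∈ T_{1,k+1}`. Consequently, if `C_k = {e}` for some `k ≥ 0`, then `K₀ = K₁ = {e}`. -/
theorem K_subset_conj_CFin {G : Type*} [Group G] (G₀ G₁ H : Subgroup G)
    (ha : IsAmalgam G₀ G₁ H) (hnd : Nondegenerate G₀ G₁ H) :
    (∀ k : ℕ, ∀ g ∈ TT G₀ G₁ H 0 (k + 1),
      KK G₀ G₁ H 0 ⊆ {x | g⁻¹ * x * g ∈ CFin G₀ G₁ H k}) ∧
    (∀ k : ℕ, ∀ g ∈ TT G₀ G₁ H 1 (k + 1),
      KK G₀ G₁ H 1 ⊆ {x | g⁻¹ * x * g ∈ CFin G₀ G₁ H k}) ∧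
    ((∃ k : ℕ, CFin G₀ G₁ H k = {1}) →
      KK G₀ G₁ H 0 = {1} ∧ KK G₀ G₁ H 1 = {1}) := by
  have h0 := ha.le_left
  have h1 := ha.le_right
  refine ⟨fun k g hg => KK_subset_conj h0 h1 0 k g hg,
    fun k g hg => KK_subset_conj h0 h1 1 k g hg, ?_⟩
  rintro ⟨k, hCk⟩
  have hnd0 : ¬G₀ ≤ H := fun h => hnd.1 (Subgroup.relIndex_eq_one.mpr h)
  have hnd1 : ¬G₁ ≤ H := fun h => hnd.2.1 (Subgroup.relIndex_eq_one.mpr h)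
  have key : ∀ j : ℕ, KK G₀ G₁ H j = {1} := by
    intro j
    obtain ⟨g, hg⟩ := TT_nonempty hnd0 hnd1 j k
    apply Set.eq_singleton_iff_unique_mem.mpr
    refine ⟨one_mem_KK G₀ G₁ H j, fun x hx => ?_⟩
    have := KK_subset_conj h0 h1 j k g hg hx
    rw [hCk] at this
    have hone : g⁻¹ * x * g = 1 := this
    have : x = g * 1 * g⁻¹ := by
      rw [← hone]; group
    simpa using this
  exact ⟨key 0, key 1⟩
end

section
/- Let X be a class of groups that satisfies condition (i), is closed under normal subgroups, and contains all abelian groups. Assume that G is any group and N is a normal subgroup of G such that both ρ(N) and ρ(G/N) are trivial. Then ρ(G) = {e}. -/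
universe u

/-- `X` is a *class of groups*: it contains the trivial group and is closed under
isomorphism. -/
def IsGroupClass (X : (G : Type u) → [Group G] → Prop) : Prop :=
  (∀ (G : Type u) [Group G], Subsingleton G → X G) ∧
  (∀ (G H : Type u) [Group G] [Group H], (G ≃* H) → X G → X H)

/-- `ρ(G)`: the subgroup of `G` generated by all normal subgroups of `G` belonging to `X`. -/
def rho (X : (G : Type u) → [Group G] → Prop) (G : Type u) [Group G] : Subgroup G :=
  sSup {N : Subgroup G | N.Normal ∧ X ↥N}

/-- Condition (i): `ρ(G) ∈ X` for every group `G`. -/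
def SatisfiesCondI (X : (G : Type u) → [Group G] → Prop) : Prop :=
  ∀ (G : Type u) [Group G], X ↥(rho X G)

/-- `X` is closed under normal subgroups. -/
def ClosedUnderNormalSubgroups (X : (G : Type u) → [Group G] → Prop) : Prop :=
  ∀ (G : Type u) [Group G], X G → ∀ N : Subgroup G, N.Normal → X ↥N
theorem rho_normal (X : (G : Type u) → [Group G] → Prop) (G : Type u) [Group G] :
    (rho X G).Normal := by
  constructor
  intro n hn g
  have key : rho X G ≤ Subgroup.comap (MulAut.conj g).toMonoidHom (rho X G) := by
    apply sSup_le
    intro M hM x hx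
    simp only [Subgroup.mem_comap, MulEquiv.coe_toMonoidHom, MulAut.conj_apply]
    exact le_sSup hM (hM.1.conj_mem x hx g)
  simpa using key hn


/-- Let `X` be a class of groups that satisfies condition (i), is closed under normal
subgroups, and contains all abelian groups. Assume that `G` is any group and `N` is a normal
subgroup of `G` such that both `ρ(N)` and `ρ(G/N)` are trivial. Then `ρ(G) = {e}`. -/
theorem rho_eq_bot_of_rho_eq_bot (X : (G : Type u) → [Group G] → Prop)
    (hclass : IsGroupClass X) (hI : SatisfiesCondI X)
    (hnorm : ClosedUnderNormalSubgroups X)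
    (habelian : ∀ (G : Type u) [Group G], (∀ a b : G, a * b = b * a) → X G)
    (G : Type u) [Group G] (N : Subgroup G) [N.Normal]
    (h1 : rho X ↥N = ⊥) (h2 : rho X (G ⧸ N) = ⊥) :
    rho X G = ⊥ := by
  set R := rho X G with hRdef
  have hRnorm : R.Normal := rho_normal X G
  have hRX : X ↥R := hI G
  -- Step 1 : R ⊓ N = ⊥
  have hdisj : R ⊓ N = ⊥ := by
    -- N.subgroupOf R is normal in R and in X
    have hNR_norm : (N.subgroupOf R).Normal := Subgroup.Normal.subgroupOf ‹N.Normal› R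
    have hNR_X : X ↥(N.subgroupOf R) := hnorm (↥R) hRX (N.subgroupOf R) hNR_norm
    -- transfer along iso to R.subgroupOf N
    have e1 : ↥(N.subgroupOf R) ≃* ↥((N ⊓ R).subgroupOf R) := by
      rw [Subgroup.inf_subgroupOf_right]
    have e2 : ↥((N ⊓ R).subgroupOf R) ≃* ↥(N ⊓ R) :=
      Subgroup.subgroupOfEquivOfLe inf_le_right
    have e3 : ↥(N ⊓ R) ≃* ↥((N ⊓ R).subgroupOf N) :=
      (Subgroup.subgroupOfEquivOfLe inf_le_left).symm
    have e4 : ↥((N ⊓ R).subgroupOf N) ≃* ↥(R.subgroupOf N) := by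
      rw [Subgroup.inf_subgroupOf_left]
    have hRN_X : X ↥(R.subgroupOf N) :=
      hclass.2 _ _ (((e1.trans e2).trans e3).trans e4) hNR_X
    have hRN_norm : (R.subgroupOf N).Normal := Subgroup.Normal.subgroupOf hRnorm N
    have : R.subgroupOf N ≤ rho X ↥N := le_sSup ⟨hRN_norm, hRN_X⟩
    rw [h1, le_bot_iff, Subgroup.subgroupOf_eq_bot] at this
    exact disjoint_iff.mp this
  -- Step 2 : the image of R in G/N is trivial, i.e. R ≤ N
  have hRleN : R ≤ N := by
    set f := QuotientGroup.mk' N with hf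
    have hker : f.ker = N := QuotientGroup.ker_mk' N
    have hrestr_inj : Function.Injective (f.domRestrict R) := by
      rw [← MonoidHom.ker_eq_bot_iff, MonoidHom.ker_domRestrict, hker,
        Subgroup.subgroupOf_eq_bot]
      exact disjoint_iff.mpr (by rw [inf_comm]; exact hdisj)
    have eimg : ↥R ≃* ↥(R.map f) := by
      have := MonoidHom.ofInjective hrestr_inj
      rwa [MonoidHom.domRestrict_range] at this
    have himg_norm : (R.map f).Normal :=
      Subgroup.Normal.map hRnorm f (QuotientGroup.mk'_surjective N)
    have himg_X : X ↥(R.map f) := hclass.2 _ _ eimg hRX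
    have : R.map f ≤ rho X (G ⧸ N) := le_sSup ⟨himg_norm, himg_X⟩
    rw [h2, le_bot_iff, Subgroup.map_eq_bot_iff, hker] at this
    exact this
  -- conclude
  rw [← hdisj, inf_eq_left.mpr hRleN]
end
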